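/- The function f(z) = z + (k/(m+1))·conj(z)^{m+1} is injective on the unit disk for every real k with 0 ≤ k ≤ 1 and every natural number m ≥ 1. -/

import Mathlib

open Metric

theorem stmt_6 (k : ℝ) (hk0 : 0 ≤ k) (hk1 : k ≤ 1) (m : ℕ) (hm : 1 ≤ m) :
    Set.InjOn (fun z : ℂ => z + ((k / (m + 1) : ℝ) : ℂ) * (starRingEnd ℂ z) ^ (m + 1))
      (ball 0 1) := by
  intro z hz w hw hzw
  simp only [mem_ball, dist_zero_right] at hz hw
  by_contra hne
  set c : ℝ := k / (m + 1) with hc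
  have hmpos : (0:ℝ) < (m:ℝ) + 1 := by positivity
  have hc0 : 0 ≤ c := div_nonneg hk0 hmpos.le
  have hcle : c ≤ 1 / ((m:ℝ) + 1) := by
    rw [hc]; gcongr
  -- from hzw
  have h1 : z - w = (c:ℂ) * ((starRingEnd ℂ w) ^ (m+1) - (starRingEnd ℂ z) ^ (m+1)) := by
    have := hzw
    simp only at this
    linear_combination this
  -- abs
  have habs : norm (z - w) = c * norm (w ^ (m+1) - z ^ (m+1)) := by
    rw [h1, norm_mul]
    congr 1
    · simp [Complex.norm_real, abs_of_nonneg hc0]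
    · rw [← map_pow, ← map_pow, ← map_sub, Complex.norm_conj]
  -- factorization
  have hfac : w ^ (m+1) - z ^ (m+1) =
      (∑ i ∈ Finset.range (m+1), w ^ i * z ^ (m - i)) * (w - z) := by
    have := geom_sum₂_mul w z (m+1)
    simpa using this.symm
  set S : ℝ := ∑ i ∈ Finset.range (m+1), norm w ^ i * norm z ^ (m - i) with hS
  have hSum : norm (∑ i ∈ Finset.range (m+1), w ^ i * z ^ (m - i)) ≤ S := by
    refine (norm_sum_le _ _).trans_eq ?_
    simp [hS, norm_mul, norm_pow]
  have hSlt : S < (m:ℝ) + 1 := by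
    have : S < ∑ _i ∈ Finset.range (m+1), (1:ℝ) := by
      apply Finset.sum_lt_sum_of_nonempty
      · exact Finset.nonempty_range_iff.mpr (Nat.succ_ne_zero m)
      · intro i hi
        rcases Nat.eq_zero_or_pos i with h0 | hpos
        · subst h0
          simpa using pow_lt_one₀ (norm_nonneg z) hz (by omega)
        · have h1 : norm w ^ i < 1 := pow_lt_one₀ (norm_nonneg w) hw (by omega)
          have h2 : norm z ^ (m - i) ≤ 1 :=
            pow_le_one₀ (norm_nonneg z) hz.le
          calc norm w ^ i * norm z ^ (m - i)
              ≤ norm w ^ i * 1 := by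
                exact mul_le_mul_of_nonneg_left h2 (pow_nonneg (norm_nonneg w) i)
            _ < 1 := by simpa using h1
    simpa using this
  have hpos : 0 < norm (z - w) := by
    simpa [sub_eq_zero] using hne
  have key : norm (w ^ (m+1) - z ^ (m+1)) ≤ S * norm (z - w) := by
    rw [hfac, norm_mul]
    have habsswap : norm (w - z) = norm (z - w) := by
      rw [← norm_neg]; ring_nf
    rw [habsswap]
    exact mul_le_mul_of_nonneg_right hSum (norm_nonneg _)
  have hle : norm (z - w) ≤ c * (S * norm (z - w)) :=
    calc norm (z - w) = c * norm (w ^ (m+1) - z ^ (m+1)) := habs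
      _ ≤ c * (S * norm (z - w)) := mul_le_mul_of_nonneg_left key hc0
  have hlt : c * (S * norm (z - w)) < norm (z - w) := by
    have hcS : c * S < 1 := by
      calc c * S ≤ (1 / ((m:ℝ) + 1)) * S := by
            exact mul_le_mul_of_nonneg_right hcle (by positivity)
        _ < (1 / ((m:ℝ) + 1)) * ((m:ℝ) + 1) := by
            exact mul_lt_mul_of_pos_left hSlt (by positivity)
        _ = 1 := by field_simp
    calc c * (S * norm (z - w)) = (c * S) * norm (z - w) := by ring
      _ < 1 * norm (z - w) := by exact mul_lt_mul_of_pos_right hcS hpos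
      _ = norm (z - w) := one_mul _
  exact absurd (hle.trans_lt hlt) (lt_irrefl _)
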